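/- The 16 spin-1 Weinberg matrices S_{μν} form a 4-tight frame for the space of 3×3 complex matrices with Hilbert–Schmidt inner product: for every 3×3 matrix A, Σ_{μ,ν=0}^{3} |tr(A† S_{μν})|² = 4 · tr(A†A). -/

import Mathlib

set_option maxHeartbeats 2000000
set_option maxRecDepth 100000

open Matrix Complex

/-- The standard 3×3 spin-1 angular momentum matrices J₁, J₂, J₃. -/
noncomputable def J : Fin 3 → Matrix (Fin 3) (Fin 3) ℂ :=
  ![((Real.sqrt 2 : ℝ) : ℂ)⁻¹ • !![0, 1, 0; 1, 0, 1; 0, 1, 0],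
    ((Real.sqrt 2 : ℝ) : ℂ)⁻¹ • !![0, -I, 0; I, 0, -I; 0, I, 0],
    !![1, 0, 0; 0, 0, 0; 0, 0, -1]]

/-- The spin-1 Weinberg covariant matrices: S₀₀ = 𝟙, S_{a0} = S_{0a} = J_a,
S_{ab} = J_aJ_b + J_bJ_a − δ_{ab}𝟙. -/
noncomputable def S (μ ν : Fin 4) : Matrix (Fin 3) (Fin 3) ℂ :=
  if hμ : μ = 0 then (if hν : ν = 0 then 1 else J (ν.pred hν))
  else if hν : ν = 0 then J (μ.pred hμ)
  else J (μ.pred hμ) * J (ν.pred hν) + J (ν.pred hν) * J (μ.pred hμ) -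
    (if μ = ν then 1 else 0)

/-- The 16 spin-1 Weinberg matrices form a 4-tight frame for the 3×3 complex
matrices with the Hilbert–Schmidt inner product:
Σ_{μν} |tr(A† S_{μν})|² = 4 tr(A†A) for every A. -/
theorem weinberg_tight_frame (A : Matrix (Fin 3) (Fin 3) ℂ) :
    ((∑ μ : Fin 4, ∑ ν : Fin 4, ‖(Aᴴ * S μ ν).trace‖ ^ 2 : ℝ) : ℂ) =
      4 * (Aᴴ * A).trace := by
  have hs : ((Real.sqrt 2 : ℝ) : ℂ) ^ 2 = 2 := by
    norm_cast
    rw [Real.sq_sqrt]; norm_num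
  have hp1 : ∀ h, Fin.pred (1:Fin 4) h = 0 := fun _ => rfl
  have hp2 : ∀ h, Fin.pred (2:Fin 4) h = 1 := fun _ => rfl
  have hp3 : ∀ h, Fin.pred (3:Fin 4) h = 2 := fun _ => rfl
  simp only [Fin.sum_univ_four, S, hp1, hp2, hp3,
    show (1:Fin 4) ≠ 0 by decide, show (2:Fin 4) ≠ 0 by decide, show (3:Fin 4) ≠ 0 by decide,
    show (1:Fin 4) ≠ 2 by decide, show (1:Fin 4) ≠ 3 by decide, show (2:Fin 4) ≠ 1 by decide,
    show (2:Fin 4) ≠ 3 by decide, show (3:Fin 4) ≠ 1 by decide, show (3:Fin 4) ≠ 2 by decide,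
    dif_pos, dif_neg, if_pos, if_neg, ne_eq, not_false_iff]
  norm_num [_root_.J, Fin.sum_univ_three, Matrix.trace, Matrix.mul_apply,
    Matrix.conjTranspose_apply, Matrix.one_apply, Matrix.smul_apply,
    show (2:Fin 3) ≠ 0 by decide, show (2:Fin 3) ≠ 1 by decide, show (0:Fin 3) ≠ 2 by decide,
    show (1:Fin 3) ≠ 2 by decide, Matrix.cons_val, Matrix.cons_val_two, Matrix.vecHead, Matrix.vecTail]
  have hne : ((Real.sqrt 2 : ℝ) : ℂ) ≠ 0 := by
    intro h
    rw [h] at hs; norm_num at hs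
  have hi2 : ((Real.sqrt 2 : ℝ) : ℂ)⁻¹ ^ 2 = 2⁻¹ := by
    rw [inv_pow, hs]
  have hi4 : ((Real.sqrt 2 : ℝ) : ℂ)⁻¹ ^ 4 = 4⁻¹ := by
    rw [inv_pow, show (4:ℕ) = 2*2 from rfl, pow_mul, hs]; norm_num
  simp only [← Complex.ofReal_pow, Complex.sq_norm, ← Complex.mul_conj]
  simp only [map_add, _root_.map_mul, map_neg, map_sub, _root_.map_one, Complex.conj_conj,
    Complex.conj_I, map_inv₀, Complex.conj_ofReal]
  ring_nf
  rw [hi2, hi4]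
  ring_nf
  simp only [Complex.I_sq, show (Complex.I)^4 = 1 by
    rw [show (4:ℕ)=2*2 from rfl, pow_mul, Complex.I_sq]; norm_num]
  ring
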